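/- For the simplicial complex \Delta on vertex set \{(i,j) : 1 \leq i \leq k, 1 \leq j \leq m_i\} whose facets are the sets \{(1,m_1),\dots,(i-1,m_{i-1}),(i,j),(i,j+1),(i+1,1),\dots,(k,1)\} for 1 \leq i \leq k and 1 \leq j \leq m_i - 1 (with each m_i \geq 2), the number of d-dimensional faces is f_d = \binom{k}{d} n - d \binom{k+1}{d+1}, where n = m_1 + \cdots + m_k, for all d \geq 0. -/

import Mathlib

open Finset

def scrollFacet (k : ℕ) (m : ℕ → ℕ) (i j : ℕ) : Finset (ℕ × ℕ) :=
  ((Finset.Icc 1 (i - 1)).image fun r => (r, m r)) ∪ {(i, j), (i, j + 1)} ∪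
    ((Finset.Icc (i + 1) k).image fun r => (r, (1 : ℕ)))

lemma mem_scrollFacet {k i j a b : ℕ} {m : ℕ → ℕ} :
    (a, b) ∈ scrollFacet k m i j ↔
      (1 ≤ a ∧ a ≤ i - 1 ∧ b = m a) ∨ (a = i ∧ b = j) ∨ (a = i ∧ b = j + 1) ∨
        (i + 1 ≤ a ∧ a ≤ k ∧ b = 1) := by
  simp only [scrollFacet, Finset.mem_union, Finset.mem_image, Finset.mem_Icc,
    Finset.mem_insert, Finset.mem_singleton, Prod.mk.injEq]
  constructor
  · rintro ((⟨r, ⟨h1, h2⟩, h3, h4⟩ | (⟨h1, h2⟩ | ⟨h1, h2⟩)) | ⟨r, ⟨h1, h2⟩, h3, h4⟩)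
    · subst h3; subst h4; exact Or.inl ⟨h1, h2, rfl⟩
    · exact Or.inr (Or.inl ⟨h1, h2⟩)
    · exact Or.inr (Or.inr (Or.inl ⟨h1, h2⟩))
    · subst h3; subst h4; exact Or.inr (Or.inr (Or.inr ⟨h1, h2, rfl⟩))
  · rintro (⟨h1, h2, h3⟩ | ⟨h1, h2⟩ | ⟨h1, h2⟩ | ⟨h1, h2, h3⟩)
    · exact Or.inl (Or.inl ⟨a, ⟨h1, h2⟩, rfl, h3.symm⟩)
    · exact Or.inl (Or.inr (Or.inl ⟨h1, h2⟩))
    · exact Or.inl (Or.inr (Or.inr ⟨h1, h2⟩))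
    · exact Or.inr ⟨a, ⟨h1, h2⟩, rfl, h3.symm⟩

def scrollPiece (k : ℕ) (m : ℕ → ℕ) (d i j : ℕ) : Finset (Finset (ℕ × ℕ)) :=
  if i = 1 ∧ j = 1 then (scrollFacet k m 1 1).powersetCard (d+1)
  else ((scrollFacet k m i j).powersetCard (d+1)).filter (fun F => (i, j+1) ∈ F)

lemma mem_scrollPiece_elim {k m d i j} {F : Finset (ℕ × ℕ)} (h : F ∈ scrollPiece k m d i j) :
    F.card = d + 1 ∧ F ⊆ scrollFacet k m i j := by
  unfold scrollPiece at h
  split_ifs at h with h11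
  · obtain ⟨rfl, rfl⟩ := h11
    rw [Finset.mem_powersetCard] at h
    exact ⟨h.2, h.1⟩
  · rw [Finset.mem_filter, Finset.mem_powersetCard] at h
    exact ⟨h.1.2, h.1.1⟩

lemma mem_scrollPiece_snd {k m d i j} {F : Finset (ℕ × ℕ)} (h : F ∈ scrollPiece k m d i j)
    (h11 : ¬ (i = 1 ∧ j = 1)) : (i, j + 1) ∈ F := by
  unfold scrollPiece at h
  rw [if_neg h11, Finset.mem_filter] at h
  exact h.2

lemma subset_step_j {k i j : ℕ} {m : ℕ → ℕ} (hj : 2 ≤ j) {F : Finset (ℕ × ℕ)}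
    (hF : F ⊆ scrollFacet k m i j) (hne : (i, j+1) ∉ F) : F ⊆ scrollFacet k m i (j-1) := by
  intro p hp
  obtain ⟨a, b⟩ := p
  rcases mem_scrollFacet.1 (hF hp) with h | ⟨rfl, rfl⟩ | ⟨rfl, rfl⟩ | h
  · exact mem_scrollFacet.2 (Or.inl h)
  · exact mem_scrollFacet.2 (Or.inr (Or.inr (Or.inl ⟨rfl, by omega⟩)))
  · exact absurd hp hne
  · exact mem_scrollFacet.2 (Or.inr (Or.inr (Or.inr h)))

lemma subset_step_i {k i : ℕ} {m : ℕ → ℕ} (hi : 2 ≤ i) (hik : i ≤ k)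
    (hm2 : 2 ≤ m (i-1)) {F : Finset (ℕ × ℕ)}
    (hF : F ⊆ scrollFacet k m i 1) (hne : (i, 1+1) ∉ F) :
    F ⊆ scrollFacet k m (i-1) (m (i-1) - 1) := by
  intro p hp
  obtain ⟨a, b⟩ := p
  rcases mem_scrollFacet.1 (hF hp) with ⟨h1, h2, h3⟩ | ⟨rfl, rfl⟩ | ⟨rfl, h⟩ | ⟨h1, h2, h3⟩
  · by_cases ha : a ≤ i - 2
    · exact mem_scrollFacet.2 (Or.inl ⟨h1, by omega, h3⟩)
    · have haa : a = i - 1 := by omega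
      subst haa
      exact mem_scrollFacet.2 (Or.inr (Or.inr (Or.inl ⟨rfl, by omega⟩)))
  · exact mem_scrollFacet.2 (Or.inr (Or.inr (Or.inr ⟨by omega, by omega, rfl⟩)))
  · subst h; exact absurd hp hne
  · exact mem_scrollFacet.2 (Or.inr (Or.inr (Or.inr ⟨by omega, h2, h3⟩)))

lemma scroll_cover {k d : ℕ} {m : ℕ → ℕ} (hk : 1 ≤ k)
    (hm : ∀ r, 1 ≤ r → r ≤ k → 2 ≤ m r) :
    ∀ i j (F : Finset (ℕ × ℕ)), 1 ≤ i → i ≤ k → 1 ≤ j → j ≤ m i - 1 → F.card = d + 1 →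
      F ⊆ scrollFacet k m i j →
      ∃ i' j', 1 ≤ i' ∧ i' ≤ k ∧ 1 ≤ j' ∧ j' ≤ m i' - 1 ∧ F ∈ scrollPiece k m d i' j' := by
  intro i
  induction i using Nat.strong_induction_on with
  | _ i ihi =>
    intro j
    induction j using Nat.strong_induction_on with
    | _ j ihj =>
      intro F hi1 hik hj1 hj2 hcard hsub
      by_cases h11 : i = 1 ∧ j = 1
      · obtain ⟨rfl, rfl⟩ := h11
        refine ⟨1, 1, le_refl 1, hk, le_refl 1, by have := hm 1 le_rfl hk; omega, ?_⟩
        unfold scrollPiece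
        rw [if_pos ⟨rfl, rfl⟩, Finset.mem_powersetCard]
        exact ⟨hsub, hcard⟩
      by_cases hmem : (i, j+1) ∈ F
      · refine ⟨i, j, hi1, hik, hj1, hj2, ?_⟩
        unfold scrollPiece
        rw [if_neg h11, Finset.mem_filter, Finset.mem_powersetCard]
        exact ⟨⟨hsub, hcard⟩, hmem⟩
      by_cases hj : 2 ≤ j
      · exact ihj (j-1) (by omega) F hi1 hik (by omega) (by omega) hcard
          (subset_step_j hj hsub hmem)
      · have hjeq : j = 1 := by omega
        subst hjeq
        have hi2 : 2 ≤ i := by omega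
        have hm2 : 2 ≤ m (i-1) := hm (i-1) (by omega) (by omega)
        exact ihi (i-1) (by omega) (m (i-1) - 1) F (by omega) (by omega) (by omega) le_rfl
          hcard (subset_step_i hi2 hik hm2 hsub hmem)

lemma mem_facet_snd {k i j i' j' : ℕ} {m : ℕ → ℕ} (hi1 : 1 ≤ i) (hj1' : 1 ≤ j')
    (h : (i', j'+1) ∈ scrollFacet k m i j) :
    i' < i ∨ (i' = i ∧ j' + 1 = j) ∨ (i' = i ∧ j' = j) := by
  rcases mem_scrollFacet.1 h with ⟨h1, h2, h3⟩ | ⟨rfl, h2⟩ | ⟨rfl, h2⟩ | ⟨h1, h2, h3⟩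
  · left; omega
  · right; left; exact ⟨rfl, h2⟩
  · right; right; exact ⟨rfl, by omega⟩
  · omega

lemma scrollPiece_disjoint {k d i j i' j' : ℕ} {m : ℕ → ℕ}
    (hi1 : 1 ≤ i) (hi1' : 1 ≤ i') (hj1 : 1 ≤ j) (hj1' : 1 ≤ j') (hne : (i, j) ≠ (i', j')) :
    Disjoint (scrollPiece k m d i j) (scrollPiece k m d i' j') := by
  rw [Finset.disjoint_left]
  intro F hF hF'
  have hsub := (mem_scrollPiece_elim hF).2
  have hsub' := (mem_scrollPiece_elim hF').2
  have hne' : ¬(i = i' ∧ j = j') := by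
    intro ⟨h1, h2⟩; exact hne (by rw [h1, h2])
  by_cases h11 : i = 1 ∧ j = 1
  · -- first piece is (1,1), second is not
    obtain ⟨rfl, rfl⟩ := h11
    have h11' : ¬ (i' = 1 ∧ j' = 1) := by tauto
    have hmem' := mem_scrollPiece_snd hF' h11'
    have hx := hsub hmem'
    rcases mem_scrollFacet.1 hx with ⟨h1, h2, h3⟩ | ⟨h1, h2⟩ | ⟨h1, h2⟩ | ⟨h1, h2, h3⟩
    · omega
    · omega
    · exact h11' ⟨h1, by omega⟩
    · omega
  · by_cases h11' : i' = 1 ∧ j' = 1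
    · obtain ⟨rfl, rfl⟩ := h11'
      have hmem := mem_scrollPiece_snd hF h11
      have hx := hsub' hmem
      rcases mem_scrollFacet.1 hx with ⟨h1, h2, h3⟩ | ⟨h1, h2⟩ | ⟨h1, h2⟩ | ⟨h1, h2, h3⟩
      · omega
      · omega
      · exact h11 ⟨h1, by omega⟩
      · omega
    · have hmem := mem_scrollPiece_snd hF h11
      have hmem' := mem_scrollPiece_snd hF' h11'
      have ha := mem_facet_snd hi1 hj1' (hsub hmem')
      have hb := mem_facet_snd hi1' hj1 (hsub' hmem)
      have hne'' : i ≠ i' ∨ j ≠ j' := by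
        by_cases h : i = i'
        · exact Or.inr fun hj => hne' ⟨h, hj⟩
        · exact Or.inl h
      rcases ha with h | ⟨ha1, ha2⟩ | ⟨ha1, ha2⟩ <;>
        rcases hb with h' | ⟨hb1, hb2⟩ | ⟨hb1, hb2⟩ <;> rcases hne'' with hc | hc <;> omega

lemma card_filter_mem_powersetCard {α : Type*} [DecidableEq α] {s : Finset α} {v : α}
    (hv : v ∈ s) (n : ℕ) :
    ((s.powersetCard (n+1)).filter (fun F => v ∈ F)).card = (s.card - 1).choose n := by
  have hvt : v ∉ s.erase v := Finset.notMem_erase v s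
  have hs : s = insert v (s.erase v) := (Finset.insert_erase hv).symm
  conv_lhs => rw [hs, Finset.powersetCard_succ_insert hvt, Finset.filter_union]
  have h1 : ((s.erase v).powersetCard (n+1)).filter (fun F => v ∈ F) = ∅ := by
    rw [Finset.filter_eq_empty_iff]
    intro F hF
    simp only [Finset.mem_powersetCard] at hF
    exact fun hvF => hvt (hF.1 hvF)
  have h2 : (((s.erase v).powersetCard n).image (insert v)).filter (fun F => v ∈ F)
      = ((s.erase v).powersetCard n).image (insert v) := by
    rw [Finset.filter_eq_self]
    intro F hF
    simp only [Finset.mem_image] at hF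
    obtain ⟨G, _, rfl⟩ := hF
    exact Finset.mem_insert_self v G
  rw [h1, h2, Finset.empty_union, Finset.card_image_of_injOn, Finset.card_powersetCard,
    Finset.card_erase_of_mem hv]
  · intro F hF G hG h
    simp only [Finset.mem_coe, Finset.mem_powersetCard] at hF hG
    have hvF : v ∉ F := fun h' => hvt (hF.1 h')
    have hvG : v ∉ G := fun h' => hvt (hG.1 h')
    rw [← Finset.erase_insert hvF, ← Finset.erase_insert hvG, h]

lemma card_scrollFacet {k i j : ℕ} {m : ℕ → ℕ} (hi1 : 1 ≤ i) (hik : i ≤ k) :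
    (scrollFacet k m i j).card = k + 1 := by
  have hinj : Function.Injective (fun r : ℕ => (r, m r)) := fun x y h => congrArg Prod.fst h
  have hinj2 : Function.Injective (fun r : ℕ => (r, (1:ℕ))) := fun x y h => congrArg Prod.fst h
  have hd1 : Disjoint ((Finset.Icc 1 (i-1)).image fun r => (r, m r))
      ({(i, j), (i, j+1)} : Finset (ℕ×ℕ)) := by
    simp only [Finset.disjoint_left, Finset.mem_image, Finset.mem_Icc, Finset.mem_insert,
      Finset.mem_singleton]
    rintro p ⟨r, ⟨h1, h2⟩, rfl⟩ (h | h) <;>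
      · have := congrArg Prod.fst h; simp only at this; omega
  have hd2 : Disjoint (((Finset.Icc 1 (i-1)).image fun r => (r, m r)) ∪ {(i, j), (i, j+1)})
      ((Finset.Icc (i+1) k).image fun r => (r, (1:ℕ))) := by
    simp only [Finset.disjoint_left, Finset.mem_union, Finset.mem_image, Finset.mem_Icc,
      Finset.mem_insert, Finset.mem_singleton]
    rintro p (⟨r, ⟨h1, h2⟩, rfl⟩ | h | h) ⟨s, ⟨h3, h4⟩, h5⟩
    · have := congrArg Prod.fst h5; simp only at this; omega
    · subst h; have := congrArg Prod.fst h5; simp only at this; omega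
    · subst h; have := congrArg Prod.fst h5; simp only at this; omega
  rw [scrollFacet, Finset.card_union_of_disjoint hd2, Finset.card_union_of_disjoint hd1,
    Finset.card_image_of_injective _ hinj, Finset.card_image_of_injective _ hinj2,
    Finset.card_insert_of_notMem (by simp), Finset.card_singleton, Nat.card_Icc, Nat.card_Icc]
  omega

lemma card_scrollPiece {k d i j : ℕ} {m : ℕ → ℕ} (hk : 1 ≤ k) (hi1 : 1 ≤ i) (hik : i ≤ k) :
    (scrollPiece k m d i j).card =
      if i = 1 ∧ j = 1 then (k+1).choose (d+1) else k.choose d := by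
  unfold scrollPiece
  split_ifs with h11
  · rw [Finset.card_powersetCard, card_scrollFacet (le_refl 1) hk]
  · rw [card_filter_mem_powersetCard (mem_scrollFacet.2 (Or.inr (Or.inr (Or.inl ⟨rfl, rfl⟩))))
      d, card_scrollFacet hi1 hik]
    simp

theorem stmt_11 (k : ℕ) (m : ℕ → ℕ) (d : ℕ) (hk : 1 ≤ k)
    (hm : ∀ i, 1 ≤ i → i ≤ k → 2 ≤ m i) :
    ({F : Finset (ℕ × ℕ) | F.card = d + 1 ∧
        ∃ i j : ℕ, 1 ≤ i ∧ i ≤ k ∧ 1 ≤ j ∧ j ≤ m i - 1 ∧ F ⊆ scrollFacet k m i j}.ncard : ℤ) =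
      (k.choose d : ℤ) * (∑ i ∈ Finset.Icc 1 k, (m i : ℤ)) -
        (d : ℤ) * ((k + 1).choose (d + 1) : ℤ) := by
  classical
  set K : ℤ := (k.choose d : ℤ) with hK
  set C : ℤ := ((k+1).choose (d+1) : ℤ) with hC
  set T : Finset (Finset (ℕ × ℕ)) :=
    (Finset.Icc 1 k).biUnion (fun i => (Finset.Icc 1 (m i - 1)).biUnion
      (fun j => scrollPiece k m d i j)) with hT
  have hset : {F : Finset (ℕ × ℕ) | F.card = d + 1 ∧
      ∃ i j : ℕ, 1 ≤ i ∧ i ≤ k ∧ 1 ≤ j ∧ j ≤ m i - 1 ∧ F ⊆ scrollFacet k m i j} = ↑T := by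
    ext F
    simp only [Set.mem_setOf_eq, hT, Finset.mem_coe, Finset.mem_biUnion, Finset.mem_Icc]
    constructor
    · rintro ⟨hcard, i, j, hi1, hik, hj1, hj2, hsub⟩
      obtain ⟨i', j', h1, h2, h3, h4, h5⟩ := scroll_cover hk hm i j F hi1 hik hj1 hj2 hcard hsub
      exact ⟨i', ⟨h1, h2⟩, j', ⟨h3, h4⟩, h5⟩
    · rintro ⟨i, ⟨hi1, hik⟩, j, ⟨hj1, hj2⟩, hF⟩
      obtain ⟨hcard, hsub⟩ := mem_scrollPiece_elim hF
      exact ⟨hcard, i, j, hi1, hik, hj1, hj2, hsub⟩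
  rw [hset, Set.ncard_coe_finset]
  have hcardT : T.card = ∑ i ∈ Finset.Icc 1 k, ∑ j ∈ Finset.Icc 1 (m i - 1),
      (scrollPiece k m d i j).card := by
    rw [hT, Finset.card_biUnion]
    · refine Finset.sum_congr rfl fun i hi => ?_
      rw [Finset.mem_Icc] at hi
      rw [Finset.card_biUnion]
      intro x hx y hy hxy
      rw [Finset.mem_coe, Finset.mem_Icc] at hx hy
      exact scrollPiece_disjoint hi.1 hi.1 hx.1 hy.1 (by simp [hxy])
    · intro x hx y hy hxy
      rw [Finset.mem_coe, Finset.mem_Icc] at hx hy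
      simp only [Function.onFun]
      rw [Finset.disjoint_biUnion_left]
      intro j hj
      rw [Finset.disjoint_biUnion_right]
      intro j' hj'
      rw [Finset.mem_Icc] at hj hj'
      exact scrollPiece_disjoint hx.1 hy.1 hj.1 hj'.1 (by simp [hxy])
  have hcast : (T.card : ℤ) = ∑ i ∈ Finset.Icc 1 k, ∑ j ∈ Finset.Icc 1 (m i - 1),
      (if i = 1 ∧ j = 1 then C else K) := by
    rw [hcardT]
    push_cast
    refine Finset.sum_congr rfl fun i hi => Finset.sum_congr rfl fun j hj => ?_
    rw [Finset.mem_Icc] at hi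
    rw [card_scrollPiece hk hi.1 hi.2]
    rw [apply_ite (fun n : ℕ => (n : ℤ))]
  rw [hcast]
  have hterm : ∀ i j : ℕ, (if i = 1 ∧ j = 1 then C else K)
      = K + (if i = 1 ∧ j = 1 then C - K else 0) := by
    intro i j; split_ifs <;> ring
  simp only [hterm, Finset.sum_add_distrib]
  have hinner1 : ∀ i ∈ Finset.Icc 1 k,
      (∑ _j ∈ Finset.Icc 1 (m i - 1), K) = ((m i : ℤ) - 1) * K := by
    intro i hi
    rw [Finset.mem_Icc] at hi
    have h2 := hm i hi.1 hi.2
    rw [Finset.sum_const, Nat.card_Icc, nsmul_eq_mul]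
    congr 1
    push_cast [Nat.cast_sub (by omega : 1 ≤ m i)]
    omega
  have hinner2 : ∀ i ∈ Finset.Icc 1 k,
      (∑ j ∈ Finset.Icc 1 (m i - 1), (if i = 1 ∧ j = 1 then C - K else 0))
        = if i = 1 then C - K else 0 := by
    intro i hi
    by_cases h : i = 1
    · subst h
      have h1 : (1:ℕ) ∈ Finset.Icc 1 (m 1 - 1) := by
        rw [Finset.mem_Icc]
        have := hm 1 le_rfl hk
        omega
      rw [if_pos rfl]
      simp only [true_and]
      rw [Finset.sum_ite_eq' (Finset.Icc 1 (m 1 - 1)) 1 (fun _ => C - K), if_pos h1]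
    · rw [if_neg h]
      exact Finset.sum_eq_zero fun j hj => by rw [if_neg (fun hc => h hc.1)]
  rw [Finset.sum_congr rfl hinner1, Finset.sum_congr rfl hinner2,
    Finset.sum_ite_eq' (Finset.Icc 1 k) 1 (fun _ => C - K),
    if_pos (Finset.mem_Icc.2 ⟨le_rfl, hk⟩)]
  rw [← Finset.sum_mul, Finset.sum_sub_distrib, Finset.sum_const, Nat.card_Icc]
  have h2 : ((k:ℤ) + 1) * (k.choose d : ℤ) = ((k+1).choose (d+1) : ℤ) * ((d:ℤ) + 1) := by
    exact_mod_cast Nat.add_one_mul_choose_eq k d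
  simp only [nsmul_eq_mul, mul_one, Nat.add_sub_cancel]
  rw [hK, hC]
  linear_combination -h2
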